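/- Let f: ℝ^d → ℝ be convex and L_f-smooth, ψ: ℝ^d → ℝ ∪ {+∞} proper closed μ-strongly convex (μ ≥ 0), P = f + ψ, and x* any point. Consider one proximal step x⁺ = prox_{ηψ}(x̃ − η(G)) interpreted via x̃⁺ = x̃ − η(G + s) with s ∈ ∂ψ(x⁺), where G is a random vector with E[G] = ∇f(x). If η ≤ 1/(4L_f), then (1 + ημ/2)E‖x̃⁺ − x*‖² ≤ ‖x̃ − x*‖² + 2η E[P(x*) − P(x⁺)] + ‖x̃ − x‖² + (1+ημ)E‖x̃⁺ − x⁺‖² + 4η² E‖G − ∇f(x)‖². -/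

import Mathlib

open MeasureTheory
open scoped InnerProductSpace


open scoped InnerProductSpace

section Aux

variable {E : Type*} [NormedAddCommGroup E] [InnerProductSpace ℝ E] [CompleteSpace E]

lemma sq_dist_tri (a b c : E) : ‖a - c‖ ^ 2 ≤ 2 * ‖a - b‖ ^ 2 + 2 * ‖b - c‖ ^ 2 := by
  have h : ‖a - c‖ ≤ ‖a - b‖ + ‖b - c‖ := by
    have := norm_add_le (a - b) (b - c)
    simpa using this
  nlinarith [norm_nonneg (a - c), norm_nonneg (a - b), norm_nonneg (b - c),
    sq_nonneg (‖a - b‖ - ‖b - c‖)]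

lemma key_id (xt v a q : E) :
    ‖(xt - v) - q‖ ^ 2 =
      ‖xt - q‖ ^ 2 - 2 * ⟪v, a - q⟫_ℝ + ‖(xt - v) - a‖ ^ 2 - ‖xt - a‖ ^ 2 := by
  have h1 : (xt - v) - q = (xt - q) - v := by abel
  have h2 : (xt - v) - a = (xt - a) - v := by abel
  have h3 : a - q = (xt - q) - (xt - a) := by abel
  rw [h1, h2, h3, norm_sub_sq_real, norm_sub_sq_real (xt - a) v, inner_sub_right]
  have c1 := real_inner_comm (xt - q) v
  have c2 := real_inner_comm (xt - a) v
  linarith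

lemma aux_grad_ineq (f : E → ℝ) (gf : E → E) (hconv : ConvexOn ℝ Set.univ f)
    (hgrad : ∀ y, HasGradientAt f (gf y) y) (a b : E) :
    ⟪gf a, b - a⟫_ℝ ≤ f b - f a := by
  have hcg : ConvexOn ℝ Set.univ (f ∘ (AffineMap.lineMap a b : ℝ →ᵃ[ℝ] E)) := by
    simpa using hconv.comp_affineMap (AffineMap.lineMap a b : ℝ →ᵃ[ℝ] E)
  have hc : HasDerivAt (fun t : ℝ => t • (b - a) + a) (b - a) 0 := by
    simpa using ((hasDerivAt_id (0 : ℝ)).smul_const (b - a)).add_const a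
  have hf : HasFDerivAt f (InnerProductSpace.toDual ℝ E (gf a)) a := hgrad a
  have hf' : HasFDerivAt f (InnerProductSpace.toDual ℝ E (gf a))
      ((fun t : ℝ => t • (b - a) + a) 0) := by simpa using hf
  have hg0 : HasDerivAt (f ∘ (AffineMap.lineMap a b : ℝ →ᵃ[ℝ] E)) ⟪gf a, b - a⟫_ℝ 0 := by
    have := hf'.comp_hasDerivAt 0 hc
    simp only [InnerProductSpace.toDual_apply_apply] at this
    exact this
  have hsl := hcg.le_slope_of_hasDerivAt (Set.mem_univ (0 : ℝ)) (Set.mem_univ (1 : ℝ))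
    one_pos hg0
  simpa [slope_def_field, Function.comp, AffineMap.lineMap_apply] using hsl

lemma aux_descent (f : E → ℝ) (gf : E → E) (Lf : ℝ) (hLf : 0 ≤ Lf)
    (hgrad : ∀ y, HasGradientAt f (gf y) y)
    (hlip : LipschitzWith (Real.toNNReal Lf) gf) (a b : E) :
    f b ≤ f a + ⟪gf a, b - a⟫_ℝ + Lf / 2 * ‖b - a‖ ^ 2 := by
  set v := b - a with hv
  set φ : ℝ → ℝ := fun t => f (t • v + a) - t * ⟪gf a, v⟫_ℝ - Lf * ‖v‖ ^ 2 / 2 * t ^ 2 with hφ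
  have hφd : ∀ t : ℝ, HasDerivAt φ
      (⟪gf (t • v + a), v⟫_ℝ - ⟪gf a, v⟫_ℝ - Lf * ‖v‖ ^ 2 * t) t := by
    intro t
    have hc : HasDerivAt (fun t : ℝ => t • v + a) v t := by
      simpa using ((hasDerivAt_id t).smul_const v).add_const a
    have h1 : HasDerivAt (fun t : ℝ => f (t • v + a)) ⟪gf (t • v + a), v⟫_ℝ t := by
      have hf : HasFDerivAt f (InnerProductSpace.toDual ℝ E (gf (t • v + a)))
          ((fun t : ℝ => t • v + a) t) := hgrad _
      have h := hf.comp_hasDerivAt t hc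
      simp only [InnerProductSpace.toDual_apply_apply] at h
      exact h
    have h2 : HasDerivAt (fun t : ℝ => t * ⟪gf a, v⟫_ℝ) ⟪gf a, v⟫_ℝ t := by
      simpa using (hasDerivAt_id t).mul_const ⟪gf a, v⟫_ℝ
    have h3 : HasDerivAt (fun t : ℝ => Lf * ‖v‖ ^ 2 / 2 * t ^ 2) (Lf * ‖v‖ ^ 2 * t) t := by
      have := (hasDerivAt_pow 2 t).const_mul (Lf * ‖v‖ ^ 2 / 2)
      exact this.congr_deriv (by ring)
    exact (h1.sub h2).sub h3
  have hanti : AntitoneOn φ (Set.Icc (0 : ℝ) 1) := by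
    apply antitoneOn_of_deriv_nonpos (convex_Icc 0 1)
    · exact fun t _ => (hφd t).continuousAt.continuousWithinAt
    · exact fun t _ => (hφd t).differentiableAt.differentiableWithinAt
    · intro t ht
      rw [interior_Icc] at ht
      rw [(hφd t).deriv]
      have hnorm : ‖gf (t • v + a) - gf a‖ ≤ Lf * (t * ‖v‖) := by
        have h := hlip.dist_le_mul (t • v + a) a
        have h2 : dist (t • v + a) a = t * ‖v‖ := by
          rw [dist_eq_norm, add_sub_cancel_right, norm_smul, Real.norm_eq_abs,
            abs_of_pos ht.1]
        rw [dist_eq_norm, h2, Real.coe_toNNReal Lf hLf] at h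
        exact h
      have hinner : ⟪gf (t • v + a) - gf a, v⟫_ℝ ≤ Lf * ‖v‖ ^ 2 * t := by
        have h2 := real_inner_le_norm (gf (t • v + a) - gf a) v
        have h3 : ‖gf (t • v + a) - gf a‖ * ‖v‖ ≤ Lf * (t * ‖v‖) * ‖v‖ :=
          mul_le_mul_of_nonneg_right hnorm (norm_nonneg v)
        nlinarith
      have hexp : ⟪gf (t • v + a), v⟫_ℝ - ⟪gf a, v⟫_ℝ = ⟪gf (t • v + a) - gf a, v⟫_ℝ := by
        rw [inner_sub_left]
      linarith
  have h01 := hanti (Set.left_mem_Icc.mpr zero_le_one) (Set.right_mem_Icc.mpr zero_le_one)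
    zero_le_one
  have hb : (1 : ℝ) • v + a = b := by rw [one_smul, hv]; abel
  simp only [hφ, hb, zero_smul, zero_add, one_pow, zero_pow, mul_zero, mul_one, zero_mul,
    sub_zero, one_mul] at h01
  linarith

end Aux

set_option maxHeartbeats 1000000

/-- One-step progress bound for the perturbed proximal iteration of EC-LSVRG in the
composite case: for `η ≤ 1/(4L_f)`,
`(1 + ημ/2)E‖x̃⁺ − x*‖² ≤ ‖x̃ − x*‖² + 2ηE[P(x*) − P(x⁺)] + ‖x̃ − x‖²
 + (1+ημ)E‖x̃⁺ − x⁺‖² + 4η²E‖G − ∇f(x)‖²`. -/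
theorem prox_step_progress {d : ℕ} {Ω : Type*} [MeasurableSpace Ω]
    (μmeas : Measure Ω) [IsProbabilityMeasure μmeas]
    (f : EuclideanSpace ℝ (Fin d) → ℝ)
    (gf : EuclideanSpace ℝ (Fin d) → EuclideanSpace ℝ (Fin d))
    (Lf μ : ℝ) (hLf : 0 < Lf) (hμ : 0 ≤ μ)
    (hconv : ConvexOn ℝ Set.univ f)
    (hgrad : ∀ y, HasGradientAt f (gf y) y)
    (hlip : LipschitzWith (Real.toNNReal Lf) gf)
    (ψ : EuclideanSpace ℝ (Fin d) → ℝ)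
    (P : EuclideanSpace ℝ (Fin d) → ℝ) (hP : ∀ y, P y = f y + ψ y)
    (xstar x e : EuclideanSpace ℝ (Fin d))
    (η : ℝ) (hη0 : 0 < η) (hη : η ≤ 1 / (4 * Lf))
    (G xp ep s : Ω → EuclideanSpace ℝ (Fin d))
    -- `s ω` is a subgradient of the `μ`-strongly convex `ψ` at `x⁺ ω`
    (hs : ∀ ω y, ψ (xp ω) + ⟪s ω, y - xp ω⟫_ℝ + (μ / 2) * ‖y - xp ω‖ ^ 2 ≤ ψ y)
    -- the perturbed update: `x̃⁺ = x̃ − η(G + s)` with `x̃ = x − e`, `x̃⁺ = x⁺ − e⁺`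
    (hupd : ∀ ω, xp ω - ep ω = (x - e) - η • (G ω + s ω))
    (hGmean : (∫ ω, G ω ∂μmeas) = gf x)
    (hGint : Integrable G μmeas)
    (hint1 : Integrable (fun ω => ‖(xp ω - ep ω) - xstar‖ ^ 2) μmeas)
    (hint2 : Integrable (fun ω => P xstar - P (xp ω)) μmeas)
    (hint3 : Integrable (fun ω => ‖(xp ω - ep ω) - xp ω‖ ^ 2) μmeas)
    (hint4 : Integrable (fun ω => ‖G ω - gf x‖ ^ 2) μmeas) :
    (1 + η * μ / 2) * (∫ ω, ‖(xp ω - ep ω) - xstar‖ ^ 2 ∂μmeas) ≤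
      ‖(x - e) - xstar‖ ^ 2 + 2 * η * (∫ ω, (P xstar - P (xp ω)) ∂μmeas) +
        ‖(x - e) - x‖ ^ 2 +
        (1 + η * μ) * (∫ ω, ‖(xp ω - ep ω) - xp ω‖ ^ 2 ∂μmeas) +
        4 * η ^ 2 * (∫ ω, ‖G ω - gf x‖ ^ 2 ∂μmeas) := by
  have hpt : ∀ ω, (1 + η * μ / 2) * ‖(xp ω - ep ω) - xstar‖ ^ 2 ≤
      ‖(x - e) - xstar‖ ^ 2 + 2 * η * (P xstar - P (xp ω)) + ‖(x - e) - x‖ ^ 2 +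
        (1 + η * μ) * ‖(xp ω - ep ω) - xp ω‖ ^ 2 + 4 * η ^ 2 * ‖G ω - gf x‖ ^ 2 -
        2 * η * ⟪G ω - gf x, x - xstar⟫_ℝ := by
    intro ω
    set A := xp ω with hA
    set g := G ω with hg
    set S := s ω with hS
    set xt := x - e with hxt
    rw [hupd ω]
    have h_id := key_id xt (η • (g + S)) A xstar
    rw [real_inner_smul_left] at h_id
    have hdec : ⟪g + S, A - xstar⟫_ℝ =
        ⟪gf x + S, A - xstar⟫_ℝ + ⟪g - gf x, x - xstar⟫_ℝ + ⟪g - gf x, A - x⟫_ℝ := by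
      simp only [inner_add_left, inner_sub_left, inner_add_right, inner_sub_right]
      ring
    rw [hdec] at h_id
    have hψ := hs ω xstar
    have hf1 := aux_grad_ineq f gf hconv hgrad x xstar
    have hf2 := aux_descent f gf Lf hLf.le hgrad hlip x A
    have hstar : P A - P xstar ≤
        ⟪gf x + S, A - xstar⟫_ℝ - μ / 2 * ‖A - xstar‖ ^ 2 + Lf / 2 * ‖A - x‖ ^ 2 := by
      have e1 : ⟪gf x + S, A - xstar⟫_ℝ =
          ⟪gf x, A - x⟫_ℝ - ⟪gf x, xstar - x⟫_ℝ + ⟪S, A - xstar⟫_ℝ := by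
        simp only [inner_add_left, inner_sub_right]
        ring
      have e2 : ⟪S, xstar - A⟫_ℝ = -⟪S, A - xstar⟫_ℝ := by
        simp only [inner_sub_right]; ring
      have e3 : ‖xstar - A‖ = ‖A - xstar‖ := norm_sub_rev _ _
      rw [e2, e3] at hψ
      rw [hP, hP]
      linarith
    have habs : -⟪g - gf x, A - x⟫_ℝ ≤ ‖g - gf x‖ * ‖A - x‖ := by
      have h1 := abs_real_inner_le_norm (g - gf x) (A - x)
      have h2 := neg_abs_le ⟪g - gf x, A - x⟫_ℝ
      linarith
    have hyoung : -(2 * η) * ⟪g - gf x, A - x⟫_ℝ ≤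
        4 * η ^ 2 * ‖g - gf x‖ ^ 2 + 1 / 4 * ‖A - x‖ ^ 2 := by
      have h3 := mul_le_mul_of_nonneg_left habs (by linarith : (0 : ℝ) ≤ 2 * η)
      nlinarith [sq_nonneg (2 * η * ‖g - gf x‖ - ‖A - x‖ / 2)]
    have htri1 : ‖A - x‖ ^ 2 ≤ 2 * ‖xt - A‖ ^ 2 + 2 * ‖xt - x‖ ^ 2 := by
      have h := sq_dist_tri A xt x
      rw [norm_sub_rev A xt] at h
      exact h
    have htri2 : ‖(xt - η • (g + S)) - xstar‖ ^ 2 ≤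
        2 * ‖A - xstar‖ ^ 2 + 2 * ‖(xt - η • (g + S)) - A‖ ^ 2 := by
      have h := sq_dist_tri (xt - η • (g + S)) A xstar
      linarith
    have hLb : η * Lf ≤ 1 / 4 := by
      have h1 := mul_le_mul_of_nonneg_right hη hLf.le
      have h2 : 1 / (4 * Lf) * Lf = 1 / 4 := by field_simp
      linarith
    have hLb2 : η * Lf * ‖A - x‖ ^ 2 ≤ 1 / 4 * ‖A - x‖ ^ 2 :=
      mul_le_mul_of_nonneg_right hLb (sq_nonneg _)
    have hstar2 := mul_le_mul_of_nonneg_left hstar (by linarith : (0 : ℝ) ≤ 2 * η)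
    have htri2s := mul_le_mul_of_nonneg_left htri2 (by positivity : (0 : ℝ) ≤ η * μ / 2)
    linarith [h_id, hstar2, hyoung, htri1, htri2s, hLb2]
  have hc : Integrable (fun ω => ⟪G ω - gf x, x - xstar⟫_ℝ) μmeas :=
    (hGint.sub (integrable_const _)).inner_const _
  have hzero : (∫ ω, ⟪G ω - gf x, x - xstar⟫_ℝ ∂μmeas) = 0 := by
    have h1 : (∫ ω, ⟪G ω - gf x, x - xstar⟫_ℝ ∂μmeas)
        = ∫ ω, ⟪x - xstar, G ω - gf x⟫_ℝ ∂μmeas := by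
      congr 1
      ext ω
      exact real_inner_comm _ _
    have h2 : ∫ ω, ⟪x - xstar, G ω - gf x⟫_ℝ ∂μmeas
        = ⟪x - xstar, ∫ ω, (G ω - gf x) ∂μmeas⟫_ℝ :=
      integral_inner (hGint.sub (integrable_const _)) (x - xstar)
    rw [h1, h2, integral_sub hGint (integrable_const _), hGmean, integral_const]
    simp
  have hlhs : Integrable (fun ω => (1 + η * μ / 2) * ‖(xp ω - ep ω) - xstar‖ ^ 2) μmeas :=
    hint1.const_mul _
  have hi1 : Integrable (fun ω => ‖(x - e) - xstar‖ ^ 2 + 2 * η * (P xstar - P (xp ω))) μmeas :=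
    (integrable_const _).add (hint2.const_mul _)
  have hi2 : Integrable (fun ω => ‖(x - e) - xstar‖ ^ 2 + 2 * η * (P xstar - P (xp ω))
      + ‖(x - e) - x‖ ^ 2) μmeas := hi1.add (integrable_const _)
  have hi3 : Integrable (fun ω => ‖(x - e) - xstar‖ ^ 2 + 2 * η * (P xstar - P (xp ω))
      + ‖(x - e) - x‖ ^ 2 + (1 + η * μ) * ‖(xp ω - ep ω) - xp ω‖ ^ 2) μmeas :=
    hi2.add (hint3.const_mul _)
  have hi4 : Integrable (fun ω => ‖(x - e) - xstar‖ ^ 2 + 2 * η * (P xstar - P (xp ω))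
      + ‖(x - e) - x‖ ^ 2 + (1 + η * μ) * ‖(xp ω - ep ω) - xp ω‖ ^ 2
      + 4 * η ^ 2 * ‖G ω - gf x‖ ^ 2) μmeas := hi3.add (hint4.const_mul _)
  have hi5 : Integrable (fun ω => ‖(x - e) - xstar‖ ^ 2 + 2 * η * (P xstar - P (xp ω))
      + ‖(x - e) - x‖ ^ 2 + (1 + η * μ) * ‖(xp ω - ep ω) - xp ω‖ ^ 2
      + 4 * η ^ 2 * ‖G ω - gf x‖ ^ 2 - 2 * η * ⟪G ω - gf x, x - xstar⟫_ℝ) μmeas :=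
    hi4.sub (hc.const_mul _)
  have hmono := integral_mono hlhs hi5 hpt
  rw [integral_const_mul] at hmono
  rw [integral_sub hi4 (hc.const_mul _), integral_add hi3 (hint4.const_mul _),
    integral_add hi2 (hint3.const_mul _), integral_add hi1 (integrable_const _),
    integral_add (integrable_const _) (hint2.const_mul _),
    integral_const_mul, integral_const_mul, integral_const_mul, integral_const_mul,
    hzero, integral_const, integral_const] at hmono
  simp only [measure_univ, probReal_univ, ENNReal.toReal_one, one_smul, smul_eq_mul, one_mul,
    mul_zero, sub_zero] at hmono
  linarith
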